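/- Let ⋆ be the unique binary operation on {1,...,N} satisfying p ⋆ 1 = p + 1 mod N and left distributivity on right multiples of 1. Then for all p, q in {1,...,N}, p ⋆ q = (p+1)^{(q)}, where x^{(1)} = x and x^{(k+1)} = x^{(k)} ⋆ x are left powers, and p + 1 is taken mod N in {1,...,N}. -/

import Mathlib

def LaverAxioms (N : ℕ) (star : ℕ → ℕ → ℕ) : Prop :=
  (∀ p q, p ∈ Set.Icc 1 N → q ∈ Set.Icc 1 N → star p q ∈ Set.Icc 1 N) ∧
  (∀ p ∈ Set.Icc 1 N, star p 1 = p % N + 1) ∧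
  (∀ p q, p ∈ Set.Icc 1 N → q ∈ Set.Icc 1 N →
    star p (star q 1) = star (star p q) (star p 1))

/-- Left powers: `leftPow star x k = x^{(k+1)}`, i.e. x^{(1)} = x and
x^{(k+1)} = x^{(k)} ⋆ x. -/
def leftPow (star : ℕ → ℕ → ℕ) (x : ℕ) : ℕ → ℕ
  | 0 => x
  | k + 1 => star (leftPow star x k) x

/-- for all p, q in {1,...,N}, p ⋆ q = (p+1)^{(q)}, where p+1 is taken
mod N in {1,...,N} (i.e. p % N + 1) and x^{(q)} = leftPow star x (q-1). -/
theorem laver_left_powers (N : ℕ) (hN : 0 < N) (star : ℕ → ℕ → ℕ)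
    (h : LaverAxioms N star) :
    ∀ p ∈ Set.Icc 1 N, ∀ q ∈ Set.Icc 1 N,
      star p q = leftPow star (p % N + 1) (q - 1) := by
  obtain ⟨hmem, h1, hdist⟩ := h
  intro p hp q hq
  obtain ⟨hq1, hqN⟩ := hq
  induction q with
  | zero => omega
  | succ n ih =>
    rcases Nat.eq_zero_or_pos n with hn0 | hn1
    · subst hn0
      simpa [leftPow] using h1 p hp
    · have hn : n ∈ Set.Icc 1 N := ⟨hn1, by omega⟩
      have hsn : star n 1 = n + 1 := by
        have := h1 n hn
        rwa [Nat.mod_eq_of_lt (by omega)] at this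
      have key := hdist p n hp hn
      rw [hsn, h1 p hp, ih hn1 (by omega)] at key
      rw [key, show n + 1 - 1 = (n - 1) + 1 by omega]
      rfl
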